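/- Let X be a (75,32,10,16) strongly regular graph with a 4-clique K whose outside-degree distribution is (b_0,b_1,b_2,b_3)=(2,23,45,1) with b_4=0, and let x0, x1 be the two vertices with no neighbor in K. Then x0 and x1 are not adjacent. -/
import Mathlib


open Finset

/-- The number of neighbors of `x` inside the vertex set `K`. -/
def nbrs {V : Type*} [DecidableEq V] (G : SimpleGraph V) [DecidableRel G.Adj]
    (K : Finset V) (x : V) : ℕ :=
  (K.filter (fun y => G.Adj x y)).card

/-- The number of vertices outside `K` with exactly `i` neighbors in `K`. -/
def bcount {V : Type*} [Fintype V] [DecidableEq V] (G : SimpleGraph V) [DecidableRel G.Adj]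
    (K : Finset V) (i : ℕ) : ℕ :=
  ((univ \ K).filter (fun x => nbrs G K x = i)).card


/-- Case (2,23,45,1): the two vertices with no neighbor in the 4-clique `K`
are not adjacent. -/
theorem stmt6 {V : Type*} [Fintype V] [DecidableEq V]
    (G : SimpleGraph V) [DecidableRel G.Adj]
    (hG : G.IsSRGWith 75 32 10 16)
    (K : Finset V) (hK : G.IsNClique 4 K)
    (hb0 : bcount G K 0 = 2) (hb1 : bcount G K 1 = 23)
    (hb2 : bcount G K 2 = 45) (hb3 : bcount G K 3 = 1) (hb4 : bcount G K 4 = 0)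
    (x0 x1 : V) (hne : x0 ≠ x1)
    (hx0K : x0 ∉ K) (hx0 : nbrs G K x0 = 0)
    (hx1K : x1 ∉ K) (hx1 : nbrs G K x1 = 0) :
    ¬ G.Adj x0 x1 := by
  classical
  intro hadj
  set S := G.neighborFinset x0 with hS
  have hfilt0 : K.filter (fun y => G.Adj x0 y) = ∅ := Finset.card_eq_zero.1 hx0
  have hnadjK : ∀ k ∈ K, ¬ G.Adj x0 k := by
    intro k hk hak
    have : k ∈ K.filter (fun y => G.Adj x0 y) := Finset.mem_filter.2 ⟨hk, hak⟩
    simp [hfilt0] at this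
  have hSK : ∀ y ∈ S, y ∉ K := by
    intro y hy hyK
    exact hnadjK y hyK ((G.mem_neighborFinset x0 y).1 hy)
  -- the sum of nbrs over S equals 64
  have hsum : ∑ y ∈ S, nbrs G K y = 64 := by
    have h1 : ∑ y ∈ S, nbrs G K y = ∑ k ∈ K, (S.filter (fun y => G.Adj y k)).card := by
      simp only [nbrs, Finset.card_filter]
      rw [Finset.sum_comm]
    rw [h1]
    have h2 : ∀ k ∈ K, (S.filter (fun y => G.Adj y k)).card = 16 := by
      intro k hk
      have hxk : x0 ≠ k := fun h => hx0K (h ▸ hk)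
      have hcn := hG.of_not_adj hxk (hnadjK k hk)
      have heq : S.filter (fun y => G.Adj y k) = (G.commonNeighbors x0 k).toFinset := by
        ext y
        simp [hS, SimpleGraph.mem_commonNeighbors, G.adj_comm y k, and_comm]
      rw [heq, Set.toFinset_card, hcn]
    rw [Finset.sum_congr rfl h2, Finset.sum_const, hK.2]
    norm_num
  -- cardinalities
  have hcardS : S.card = 32 := by
    rw [hS, G.card_neighborFinset_eq_degree]
    exact hG.regular x0
  have hx1S : x1 ∈ S := (G.mem_neighborFinset x0 x1).2 hadj
  have hcardS' : (S.erase x1).card = 31 := by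
    rw [Finset.card_erase_of_mem hx1S, hcardS]
  -- each vertex in S has at most 3 neighbors in K
  have hle3 : ∀ y ∈ S, nbrs G K y ≤ 3 := by
    intro y hy
    have h4 : nbrs G K y ≤ 4 := by
      have := Finset.card_filter_le K (fun z => G.Adj y z)
      rw [hK.2] at this
      exact this
    rcases Nat.lt_or_ge (nbrs G K y) 4 with h | h
    · omega
    · exfalso
      have hy4 : nbrs G K y = 4 := le_antisymm h4 h
      have : y ∈ (univ \ K).filter (fun x => nbrs G K x = 4) :=
        Finset.mem_filter.2 ⟨Finset.mem_sdiff.2 ⟨Finset.mem_univ y, hSK y hy⟩, hy4⟩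
      have hempty : (univ \ K).filter (fun x => nbrs G K x = 4) = ∅ :=
        Finset.card_eq_zero.1 hb4
      simp [hempty] at this
  -- at most one vertex in S.erase x1 has 3 neighbors in K
  have h3card : ((S.erase x1).filter (fun y => nbrs G K y = 3)).card ≤ 1 := by
    have hsub : (S.erase x1).filter (fun y => nbrs G K y = 3) ⊆
        (univ \ K).filter (fun x => nbrs G K x = 3) := by
      intro y hy
      rcases Finset.mem_filter.1 hy with ⟨hyS, hy3⟩
      exact Finset.mem_filter.2 ⟨Finset.mem_sdiff.2
        ⟨Finset.mem_univ y, hSK y (Finset.mem_of_mem_erase hyS)⟩, hy3⟩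
    calc _ ≤ ((univ \ K).filter (fun x => nbrs G K x = 3)).card :=
            Finset.card_le_card hsub
      _ = 1 := hb3
  -- upper bound the sum
  have hsplit : ∑ y ∈ S, nbrs G K y = ∑ y ∈ S.erase x1, nbrs G K y := by
    rw [← Finset.add_sum_erase S _ hx1S, hx1, zero_add]
  have hub : ∑ y ∈ S.erase x1, nbrs G K y ≤ 63 := by
    have hpt : ∀ y ∈ S.erase x1,
        nbrs G K y ≤ 2 + (if nbrs G K y = 3 then 1 else 0) := by
      intro y hy
      have := hle3 y (Finset.mem_of_mem_erase hy)
      by_cases h : nbrs G K y = 3 <;> simp [h] <;> omega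
    calc ∑ y ∈ S.erase x1, nbrs G K y
        ≤ ∑ y ∈ S.erase x1, (2 + (if nbrs G K y = 3 then 1 else 0)) :=
          Finset.sum_le_sum hpt
      _ = 2 * 31 + ((S.erase x1).filter (fun y => nbrs G K y = 3)).card := by
          rw [Finset.sum_add_distrib, Finset.sum_const, hcardS',
            ← Finset.card_filter]
          ring_nf
      _ ≤ 63 := by omega
  rw [hsplit] at hsum
  omega
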